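/- Let q > 0 and define N₁(s) = ((s/ω_l)² + s/ω_l + 1)/((s/ω_l)² + s/(q ω_l) + 1). Then the phase of N₁ at frequency ω = ζ ω_l, where ζ = (√2/2)·√((2q + 1 - √(1+4q))/q), equals arctan(ζ/(1-ζ²)) - arctan((ζ/q)/(1-ζ²)), and this frequency is a stationary point of the phase of N₁ on (0, ω_l), i.e. d/dω ∠N₁(jω) = 0 at ω = ζ ω_l. -/

import Mathlib

open Real

private lemma stmt7_deriv (q ωl : ℝ) (hq : 0 < q) (hωl : 0 < ωl) (ζ : ℝ)
    (hζpos : 0 < ζ) (hζlt : ζ < 1) (hkey : (1 - ζ ^ 2) ^ 2 * q = ζ ^ 2)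
    (phase : ℝ → ℝ)
    (hphase : ∀ ω : ℝ, phase ω =
        Real.arctan ((ω / ωl) / (1 - (ω / ωl) ^ 2)) -
          Real.arctan (((ω / ωl) / q) / (1 - (ω / ωl) ^ 2))) :
    deriv phase (ζ * ωl) = 0 := by
  have hd0 : 0 < 1 - ζ ^ 2 := by nlinarith
  have hxn : ζ * ωl / ωl = ζ := by field_simp
  have h1 : HasDerivAt (fun ω : ℝ => ω / ωl) (1 / ωl) (ζ * ωl) := by
    simpa using (hasDerivAt_id (ζ * ωl)).div_const ωl
  have hsq : HasDerivAt (fun ω : ℝ => 1 - (ω / ωl) ^ 2) (-(2 * ζ / ωl)) (ζ * ωl) := by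
    have h2 := (hasDerivAt_const (ζ * ωl) (1:ℝ)).sub (h1.pow 2)
    exact h2.congr_deriv (by rw [hxn]; ring)
  have hne : 1 - (ζ * ωl / ωl) ^ 2 ≠ 0 := by rw [hxn]; exact ne_of_gt hd0
  have hg1 : HasDerivAt (fun ω : ℝ => (ω / ωl) / (1 - (ω / ωl) ^ 2))
      ((1 / ωl * (1 - ζ ^ 2) - ζ * (-(2 * ζ / ωl))) / (1 - ζ ^ 2) ^ 2) (ζ * ωl) := by
    have := h1.div hsq hne
    rw [hxn] at this
    exact this
  have hg2 : HasDerivAt (fun ω : ℝ => (ω / ωl / q) / (1 - (ω / ωl) ^ 2))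
      ((1 / ωl / q * (1 - ζ ^ 2) - ζ / q * (-(2 * ζ / ωl))) / (1 - ζ ^ 2) ^ 2) (ζ * ωl) := by
    have := (h1.div_const q).div hsq hne
    rw [hxn] at this
    exact this
  have hval1 : ζ * ωl / ωl / (1 - (ζ * ωl / ωl) ^ 2) = ζ / (1 - ζ ^ 2) := by rw [hxn]
  have hval2 : ζ * ωl / ωl / q / (1 - (ζ * ωl / ωl) ^ 2) = ζ / q / (1 - ζ ^ 2) := by rw [hxn]
  have hat1 : HasDerivAt Real.arctan (1 / (1 + (ζ / (1 - ζ ^ 2)) ^ 2))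
      (ζ * ωl / ωl / (1 - (ζ * ωl / ωl) ^ 2)) := by
    rw [hval1]; exact Real.hasDerivAt_arctan _
  have hat2 : HasDerivAt Real.arctan (1 / (1 + (ζ / q / (1 - ζ ^ 2)) ^ 2))
      (ζ * ωl / ωl / q / (1 - (ζ * ωl / ωl) ^ 2)) := by
    rw [hval2]; exact Real.hasDerivAt_arctan _
  have ha1 := hat1.comp (ζ * ωl) hg1
  have ha2 := hat2.comp (ζ * ωl) hg2
  have hph : HasDerivAt phase
      (1 / (1 + (ζ / (1 - ζ ^ 2)) ^ 2) *
          ((1 / ωl * (1 - ζ ^ 2) - ζ * (-(2 * ζ / ωl))) / (1 - ζ ^ 2) ^ 2) -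
        1 / (1 + (ζ / q / (1 - ζ ^ 2)) ^ 2) *
          ((1 / ωl / q * (1 - ζ ^ 2) - ζ / q * (-(2 * ζ / ωl))) / (1 - ζ ^ 2) ^ 2)) (ζ * ωl) := by
    have := ha1.sub ha2
    have hfe : phase = fun ω : ℝ =>
        Real.arctan ((ω / ωl) / (1 - (ω / ωl) ^ 2)) -
          Real.arctan (((ω / ωl) / q) / (1 - (ω / ωl) ^ 2)) := funext hphase
    rw [hfe]
    exact this
  rw [hph.deriv]
  have hζne : ζ ≠ 0 := ne_of_gt hζpos
  have hdne : (1 - ζ ^ 2) ≠ 0 := ne_of_gt hd0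
  have hq1 : (1:ℝ) + q ≠ 0 := by positivity
  have T1 : 1 / (1 + (ζ / (1 - ζ ^ 2)) ^ 2) *
      ((1 / ωl * (1 - ζ ^ 2) - ζ * -(2 * ζ / ωl)) / (1 - ζ ^ 2) ^ 2) =
      q * (1 + ζ ^ 2) / (ωl * ζ ^ 2 * (1 + q)) := by
    field_simp
    ring_nf
    linear_combination (-(1 + ζ ^ 2)) * hkey
  have T2 : 1 / (1 + (ζ / q / (1 - ζ ^ 2)) ^ 2) *
      ((1 / ωl / q * (1 - ζ ^ 2) - ζ / q * -(2 * ζ / ωl)) / (1 - ζ ^ 2) ^ 2) =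
      q * (1 + ζ ^ 2) / (ωl * ζ ^ 2 * (1 + q)) := by
    field_simp
    ring_nf
    linear_combination (-(q * (1 + ζ ^ 2))) * hkey
  rw [T1, T2, sub_self]

/-- the phase of the notch/anti-notch compensator
`N₁(s) = ((s/ωl)² + s/ωl + 1)/((s/ωl)² + s/(qωl) + 1)`, which at frequency `ω`
equals `arctan((ω/ωl)/(1-(ω/ωl)²)) - arctan(((ω/ωl)/q)/(1-(ω/ωl)²))`, takes the
stated value at `ω = ζ ωl` and is stationary there on `(0, ωl)`. -/
theorem stmt7 (q ωl : ℝ) (hq : 0 < q) (hωl : 0 < ωl)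
    (ζ : ℝ) (hζ : ζ = (Real.sqrt 2 / 2) * Real.sqrt ((2 * q + 1 - Real.sqrt (1 + 4 * q)) / q))
    (phase : ℝ → ℝ)
    (hphase : ∀ ω : ℝ, phase ω =
        Real.arctan ((ω / ωl) / (1 - (ω / ωl) ^ 2)) -
          Real.arctan (((ω / ωl) / q) / (1 - (ω / ωl) ^ 2))) :
    phase (ζ * ωl) =
        Real.arctan (ζ / (1 - ζ ^ 2)) - Real.arctan ((ζ / q) / (1 - ζ ^ 2)) ∧
      ζ * ωl ∈ Set.Ioo 0 ωl ∧ deriv phase (ζ * ωl) = 0 := by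
  set s := Real.sqrt (1 + 4 * q) with hsdef
  have hs0 : 0 ≤ s := Real.sqrt_nonneg _
  have hs : s ^ 2 = 1 + 4 * q := Real.sq_sqrt (by nlinarith)
  have hs1 : 1 < s := by nlinarith
  have hslt : s < 2 * q + 1 := by nlinarith
  have harg : 0 < (2 * q + 1 - s) / q := div_pos (by nlinarith) hq
  have hζ2 : ζ ^ 2 = (2 * q + 1 - s) / (2 * q) := by
    rw [hζ]
    rw [mul_pow, div_pow, Real.sq_sqrt (by norm_num : (0:ℝ) ≤ 2),
      Real.sq_sqrt harg.le]
    ring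
  have hζpos : 0 < ζ := by
    rw [hζ]; positivity
  have hζsqlt : ζ ^ 2 < 1 := by
    rw [hζ2, div_lt_one (by positivity)]; linarith
  have hζlt : ζ < 1 := by nlinarith [hζsqlt, hζpos]
  have hkey : (1 - ζ ^ 2) ^ 2 * q = ζ ^ 2 := by
    rw [hζ2]
    field_simp
    nlinarith [hs]
  have hxn : ζ * ωl / ωl = ζ := by field_simp
  refine ⟨?_, ⟨mul_pos hζpos hωl, by nlinarith⟩, ?_⟩
  · rw [hphase, hxn]
  · exact stmt7_deriv q ωl hq hωl ζ hζpos hζlt hkey phase hphase
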